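/- With Ēₙ(f) = limsup_{x→∞}(Sⁿf)(x) and Ē_∞(f) = lim_{n→∞} Ēₙ(f), one has Ē_∞(f − Sf) = 0 for every f ∈ L^∞(ℝ₊). More precisely, |Ēₙ(f − Sf)| ≤ ‖Sⁿf − S^{n+1}f‖_∞ ≤ 2‖f‖_∞ e^{-n}nⁿ/n! → 0. -/

import Mathlib

open Filter MeasureTheory Set

noncomputable def Sop (f : ℝ → ℝ) (x : ℝ) : ℝ :=
  Real.exp (-x) * ∫ t in (0:ℝ)..x, f t * Real.exp t

noncomputable def En (f : ℝ → ℝ) (n : ℕ) : ℝ := limsup (Sop^[n] f) atTop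

/- ### Auxiliary lemmas -/

/-- If `|u| ≤ B` eventually at `atTop`, then `|limsup u| ≤ B`. -/
lemma aux_abs_limsup {u : ℝ → ℝ} {B : ℝ} (h : ∀ᶠ x in atTop, |u x| ≤ B) :
    |limsup u atTop| ≤ B := by
  have hub : ∀ᶠ x in atTop, u x ≤ B := h.mono fun x hx => (abs_le.1 hx).2
  have hlb : ∀ᶠ x in atTop, -B ≤ u x := h.mono fun x hx => (abs_le.1 hx).1
  have hbd : IsBoundedUnder (· ≤ ·) atTop u := ⟨B, hub⟩
  have hbd' : IsBoundedUnder (· ≥ ·) atTop u := ⟨-B, hlb⟩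
  rw [abs_le]
  constructor
  · exact le_trans (le_liminf_of_le hbd.isCoboundedUnder_ge hlb) (liminf_le_limsup hbd hbd')
  · exact limsup_le_of_le hbd'.isCoboundedUnder_le hub

/-- Measurable and bounded on `[a,b]` implies interval integrable. -/
lemma aux_II {φ : ℝ → ℝ} (hφ : Measurable φ) {M a b : ℝ} (hab : a ≤ b)
    (hM : ∀ s ∈ Icc a b, |φ s| ≤ M) : IntervalIntegrable φ volume a b := by
  rw [intervalIntegrable_iff_integrableOn_Icc_of_le hab]
  refine Integrable.mono' (integrable_const M) hφ.aestronglyMeasurable.restrict ?_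
  filter_upwards [ae_restrict_mem measurableSet_Icc] with s hs
  simpa [Real.norm_eq_abs] using hM s hs

/-- Fubini on the triangle `0 ≤ s ≤ t ≤ x`. -/
lemma aux_fub {φ : ℝ → ℝ} (hφ : Measurable φ) {M x : ℝ} (hx : 0 ≤ x)
    (hM : ∀ s ∈ Icc 0 x, |φ s| ≤ M) (n : ℕ) :
    (∫ t in (0:ℝ)..x, ∫ s in (0:ℝ)..t, (t - s) ^ n / n.factorial * φ s)
      = ∫ s in (0:ℝ)..x, (x - s) ^ (n + 1) / (n + 1).factorial * φ s := by
  have hM0 : 0 ≤ M := le_trans (abs_nonneg _) (hM 0 ⟨le_refl 0, hx⟩)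
  set μ : Measure ℝ := volume.restrict (Ioc (0:ℝ) x) with hμ
  haveI : IsFiniteMeasure μ := ⟨by rw [hμ, Measure.restrict_apply_univ]; exact measure_Ioc_lt_top⟩
  set F : ℝ → ℝ → ℝ := fun s t => (t - s) ^ n / n.factorial * φ s with hF
  set G : ℝ → ℝ → ℝ := fun s t => (Ioc (0:ℝ) t).indicator (fun s => F s t) s with hG
  -- measurability of the uncurried kernel
  have hmeasG : Measurable (Function.uncurry fun t s => G s t) := by
    have hset : MeasurableSet {p : ℝ × ℝ | 0 < p.2 ∧ p.2 ≤ p.1} :=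
      (measurableSet_lt measurable_const measurable_snd).inter
        (measurableSet_le measurable_snd measurable_fst)
    have hfun : Measurable fun p : ℝ × ℝ => (p.1 - p.2) ^ n / (n.factorial : ℝ) * φ p.2 :=
      (((measurable_fst.sub measurable_snd).pow_const n).div_const _).mul (hφ.comp measurable_snd)
    have : (Function.uncurry fun t s => G s t)
        = Set.indicator {p : ℝ × ℝ | 0 < p.2 ∧ p.2 ≤ p.1}
            (fun p => (p.1 - p.2) ^ n / (n.factorial : ℝ) * φ p.2) := by
      ext p
      by_cases h : 0 < p.2 ∧ p.2 ≤ p.1 <;>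
        simp [Function.uncurry, hG, Set.indicator_apply, Set.mem_Ioc, h, hF]
    rw [this]
    exact hfun.indicator hset
  have hintG : Integrable (Function.uncurry fun t s => G s t) (μ.prod μ) := by
    refine Integrable.mono' (integrable_const (x ^ n / n.factorial * M))
      hmeasG.aestronglyMeasurable ?_
    have hprod : μ.prod μ = (volume.prod volume).restrict ((Ioc (0:ℝ) x) ×ˢ (Ioc (0:ℝ) x)) := by
      rw [hμ, Measure.prod_restrict]
    rw [hprod]
    filter_upwards [ae_restrict_mem (measurableSet_Ioc.prod measurableSet_Ioc)] with p hp
    obtain ⟨hp1, hp2⟩ := hp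
    by_cases h : p.2 ∈ Ioc 0 p.1
    · have h1 : |(p.1 - p.2) ^ n| ≤ x ^ n := by
        rw [abs_pow]
        refine pow_le_pow_left₀ (abs_nonneg _) ?_ n
        rw [abs_of_nonneg (by linarith [h.2] : (0:ℝ) ≤ p.1 - p.2)]
        have := h.1
        have := hp1.2
        linarith
      have h2 : |φ p.2| ≤ M := hM p.2 ⟨le_of_lt hp2.1, hp2.2⟩
      have hval : (Function.uncurry fun t s => G s t) p = F p.2 p.1 := by
        simp [Function.uncurry, hG, Set.indicator_of_mem h]
      rw [hval, hF, Real.norm_eq_abs, abs_mul, abs_div, abs_pow, Nat.abs_cast]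
      have hfp : (0:ℝ) < n.factorial := Nat.cast_pos.mpr n.factorial_pos
      rw [abs_pow] at h1
      gcongr
    · simp only [Function.uncurry, hG, Set.indicator_of_notMem h, norm_zero]
      positivity
  -- rewrite LHS as a double integral over the box
  rw [intervalIntegral.integral_of_le hx]
  have hLHS : ∀ t ∈ Ioc (0:ℝ) x,
      (∫ s in (0:ℝ)..t, (t - s) ^ n / n.factorial * φ s) = ∫ s, G s t ∂μ := by
    intro t ht
    rw [intervalIntegral.integral_of_le (le_of_lt ht.1), hμ,
      hG]
    rw [setIntegral_indicator measurableSet_Ioc]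
    rw [Set.inter_eq_right.mpr (Ioc_subset_Ioc_right ht.2)]
  rw [setIntegral_congr_fun measurableSet_Ioc hLHS]
  have hswap := MeasureTheory.integral_integral_swap (f := fun t s => G s t) hintG
  rw [hswap]
  -- compute the inner integral for fixed s
  rw [intervalIntegral.integral_of_le hx]
  refine setIntegral_congr_fun measurableSet_Ioc ?_
  intro s hs
  have hs0 : 0 < s := hs.1
  have hsx : s ≤ x := hs.2
  show (∫ t in Ioc (0:ℝ) x, G s t) = (x - s) ^ (n + 1) / ((n+1).factorial : ℝ) * φ s
  have hGs : (fun t => G s t) = (Ici s).indicator (fun t => F s t) := by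
    funext t
    by_cases h : s ≤ t
    · simp [hG, Set.indicator_apply, Set.mem_Ioc, Set.mem_Ici, hs0, h]
    · simp [hG, Set.indicator_apply, Set.mem_Ioc, Set.mem_Ici, hs0, h]
  rw [hGs, setIntegral_indicator measurableSet_Ici]
  have hset2 : Ioc (0:ℝ) x ∩ Ici s = Icc s x := by
    ext t
    simp only [Set.mem_inter_iff, Set.mem_Ioc, Set.mem_Ici, Set.mem_Icc]
    constructor
    · rintro ⟨⟨_, h2⟩, h3⟩; exact ⟨h3, h2⟩
    · rintro ⟨h1, h2⟩; exact ⟨⟨lt_of_lt_of_le hs0 h1, h2⟩, h1⟩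
  rw [hset2, MeasureTheory.integral_Icc_eq_integral_Ioc, ← intervalIntegral.integral_of_le hsx]
  have hintgr : ∀ t : ℝ, F s t = (t - s) ^ n * (φ s / n.factorial) := by
    intro t; rw [hF]; ring
  simp_rw [hintgr]
  rw [intervalIntegral.integral_mul_const,
    intervalIntegral.integral_comp_sub_right (fun u => u ^ n) s, sub_self,
    integral_pow]
  have hfac : ((n + 1).factorial : ℝ) = (n + 1) * n.factorial := by
    rw [Nat.factorial_succ]; push_cast; ring
  have hne : (n.factorial : ℝ) ≠ 0 := Nat.cast_ne_zero.mpr n.factorial_pos.ne'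
  have hne1 : ((n:ℝ) + 1) ≠ 0 := by positivity
  rw [hfac]
  field_simp
  simp

/-- Kernel representation of the iterates. -/
lemma aux_kernel (f : ℝ → ℝ) (C : ℝ) (hf : Measurable f) (hbd : ∀ x, |f x| ≤ C) (n : ℕ) :
    ∀ x, 0 ≤ x → Sop^[n + 1] f x
      = Real.exp (-x) * ∫ t in (0:ℝ)..x, (x - t) ^ n / n.factorial * (f t * Real.exp t) := by
  have hC : 0 ≤ C := le_trans (abs_nonneg _) (hbd 0)
  have hφ : Measurable fun s => f s * Real.exp s := hf.mul Real.measurable_exp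
  induction n with
  | zero =>
    intro x hx
    simp [Sop]
  | succ n ih =>
    intro x hx
    have hbound : ∀ s ∈ Icc (0:ℝ) x, |f s * Real.exp s| ≤ C * Real.exp x := by
      intro s hs
      rw [abs_mul, abs_of_nonneg (Real.exp_pos s).le]
      exact mul_le_mul (hbd s) (Real.exp_le_exp.2 hs.2) (Real.exp_pos s).le hC
    rw [Function.iterate_succ_apply']
    show Real.exp (-x) * (∫ t in (0:ℝ)..x, Sop^[n+1] f t * Real.exp t) = _
    rw [← aux_fub hφ hx hbound n]
    congr 1
    apply intervalIntegral.integral_congr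
    intro t ht
    rw [Set.uIcc_of_le hx] at ht
    show Sop^[n+1] f t * Real.exp t
        = ∫ s in (0:ℝ)..t, (t - s) ^ n / n.factorial * (f s * Real.exp s)
    rw [ih t ht.1, Real.exp_neg]
    field_simp

/-- Interval integrability of the integrands at every level. -/
lemma aux_iterII (f : ℝ → ℝ) (C : ℝ) (hf : Measurable f) (hbd : ∀ x, |f x| ≤ C) :
    ∀ n : ℕ, (1 ≤ n → Continuous (Sop^[n] f)) ∧
      ∀ a b : ℝ, IntervalIntegrable (fun t => Sop^[n] f t * Real.exp t) volume a b := by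
  have hC : 0 ≤ C := le_trans (abs_nonneg _) (hbd 0)
  have base : ∀ a b : ℝ, IntervalIntegrable (fun t => f t * Real.exp t) volume a b := by
    intro a b
    rcases le_total a b with hab | hab
    · refine aux_II (hf.mul Real.measurable_exp) hab (M := C * Real.exp b) ?_
      intro s hs
      rw [Pi.mul_apply, abs_mul, abs_of_nonneg (Real.exp_pos s).le]
      exact mul_le_mul (hbd s) (Real.exp_le_exp.2 hs.2) (Real.exp_pos s).le hC
    · refine IntervalIntegrable.symm ?_
      refine aux_II (hf.mul Real.measurable_exp) hab (M := C * Real.exp a) ?_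
      intro s hs
      rw [Pi.mul_apply, abs_mul, abs_of_nonneg (Real.exp_pos s).le]
      exact mul_le_mul (hbd s) (Real.exp_le_exp.2 hs.2) (Real.exp_pos s).le hC
  have hcont : ∀ g : ℝ → ℝ,
      (∀ a b : ℝ, IntervalIntegrable (fun t => g t * Real.exp t) volume a b) →
      Continuous (Sop g) := by
    intro g hg
    unfold Sop
    exact (Real.continuous_exp.comp continuous_neg).mul
      (intervalIntegral.continuous_primitive hg 0)
  intro n
  induction n with
  | zero => exact ⟨fun h => absurd h (by norm_num), base⟩
  | succ n ih =>
    have hcn : Continuous (Sop^[n+1] f) := by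
      rw [Function.iterate_succ_apply']
      exact hcont _ ih.2
    exact ⟨fun _ => hcn, fun a b => ((hcn.mul Real.continuous_exp).intervalIntegrable a b)⟩

/-- `Sⁿ(f - Sf) = Sⁿf - Sⁿ⁺¹f`. -/
lemma aux_sub (f : ℝ → ℝ) (C : ℝ) (hf : Measurable f) (hbd : ∀ x, |f x| ≤ C) (n : ℕ) :
    Sop^[n] (fun x => f x - Sop f x) = fun x => Sop^[n] f x - Sop^[n+1] f x := by
  induction n with
  | zero => funext x; simp
  | succ n ih =>
    funext x
    rw [Function.iterate_succ_apply', ih]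
    have h1 := (aux_iterII f C hf hbd n).2 0 x
    have h2 := (aux_iterII f C hf hbd (n+1)).2 0 x
    have hSopsub : Sop (fun y => Sop^[n] f y - Sop^[n+1] f y) x
        = Sop (Sop^[n] f) x - Sop (Sop^[n+1] f) x := by
      show Real.exp (-x) * (∫ t in (0:ℝ)..x, (Sop^[n] f t - Sop^[n+1] f t) * Real.exp t)
          = Real.exp (-x) * (∫ t in (0:ℝ)..x, Sop^[n] f t * Real.exp t)
            - Real.exp (-x) * (∫ t in (0:ℝ)..x, Sop^[n+1] f t * Real.exp t)
      rw [← mul_sub, ← intervalIntegral.integral_sub h1 h2]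
      congr 1
      apply intervalIntegral.integral_congr
      intro t _
      show (Sop^[n] f t - Sop^[n+1] f t) * Real.exp t
          = Sop^[n] f t * Real.exp t - Sop^[n+1] f t * Real.exp t
      ring
    rw [hSopsub, ← Function.iterate_succ_apply' Sop n f,
      ← Function.iterate_succ_apply' Sop (n+1) f]

/-- The derivative of `h(s) = e^{-s} s^{m+1}/(m+1)!`. -/
lemma aux_deriv (m : ℕ) (s : ℝ) :
    HasDerivAt (fun s => Real.exp (-s) * s ^ (m+1) / (m+1).factorial)
      (Real.exp (-s) * (s ^ m / m.factorial - s ^ (m+1) / (m+1).factorial)) s := by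
  have h1 : HasDerivAt (fun s : ℝ => Real.exp (-s)) (-Real.exp (-s)) s := by
    simpa using (hasDerivAt_neg s).exp
  have h2 : HasDerivAt (fun s : ℝ => s ^ (m+1)) ((m+1 : ℕ) * s ^ m) s := by
    simpa using hasDerivAt_pow (m+1) s
  have h3 := (h1.mul h2).div_const ((m+1).factorial : ℝ)
  refine h3.congr_deriv ?_
  have hfac : ((m + 1).factorial : ℝ) = (m + 1) * m.factorial := by
    rw [Nat.factorial_succ]; push_cast; ring
  have hne : (m.factorial : ℝ) ≠ 0 := Nat.cast_ne_zero.mpr m.factorial_pos.ne'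
  have hne1 : ((m:ℝ) + 1) ≠ 0 := by positivity
  rw [hfac]
  field_simp
  push_cast
  ring

/-- Bound on the total variation integral. -/
lemma aux_hint (m : ℕ) (x : ℝ) (hx : 0 ≤ x) :
    (∫ u in (0:ℝ)..x, |Real.exp (-u) * (u ^ m / m.factorial - u ^ (m+1) / (m+1).factorial)|)
      ≤ 2 * (Real.exp (-((m:ℝ)+1)) * ((m:ℝ)+1) ^ (m+1) / (m+1).factorial) := by
  set N : ℝ := (m:ℝ) + 1 with hN
  set H : ℝ → ℝ := fun s => Real.exp (-s) * s ^ (m+1) / (m+1).factorial with hH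
  set d : ℝ → ℝ := fun s => Real.exp (-s) * (s ^ m / m.factorial - s ^ (m+1) / (m+1).factorial)
    with hd
  have hderiv : ∀ s, HasDerivAt H (d s) s := fun s => aux_deriv m s
  have hcont : Continuous d := by
    apply Continuous.mul
    · exact Real.continuous_exp.comp continuous_neg
    · exact ((continuous_pow m).div_const _).sub ((continuous_pow (m+1)).div_const _)
  have hN0 : 0 < N := by rw [hN]; positivity
  have hfacpos : (0:ℝ) < (m+1).factorial := Nat.cast_pos.mpr (m+1).factorial_pos
  have hmfacpos : (0:ℝ) < m.factorial := Nat.cast_pos.mpr m.factorial_pos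
  have hfac : ((m + 1).factorial : ℝ) = N * m.factorial := by
    rw [Nat.factorial_succ, hN]; push_cast; ring
  -- sign of d
  have hdpos : ∀ s, 0 ≤ s → s ≤ N → 0 ≤ d s := by
    intro s h0 h1
    rw [hd]
    have : s ^ (m+1) / (m+1).factorial ≤ s ^ m / m.factorial := by
      rw [hfac, pow_succ]
      rw [div_le_div_iff₀ (by positivity) hmfacpos]
      have h2 : (0:ℝ) ≤ s ^ m := pow_nonneg h0 m
      nlinarith [mul_le_mul_of_nonneg_right (mul_le_mul_of_nonneg_left h1 h2) hmfacpos.le]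
    have := sub_nonneg.mpr this
    positivity
  have hdneg : ∀ s, N ≤ s → d s ≤ 0 := by
    intro s h1
    have h0 : (0:ℝ) ≤ s := le_trans hN0.le h1
    rw [hd]
    have : s ^ m / m.factorial ≤ s ^ (m+1) / (m+1).factorial := by
      rw [hfac, pow_succ]
      rw [div_le_div_iff₀ hmfacpos (by positivity)]
      have h2 : (0:ℝ) ≤ s ^ m := pow_nonneg h0 m
      nlinarith [mul_le_mul_of_nonneg_right (mul_le_mul_of_nonneg_left h1 h2) hmfacpos.le]
    have h3 := sub_nonpos.mpr this
    have h4 := (Real.exp_pos (-s)).le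
    exact mul_nonpos_of_nonneg_of_nonpos h4 h3
  have hH0 : H 0 = 0 := by simp [hH]
  have hHnonneg : ∀ s, 0 ≤ s → 0 ≤ H s := by intro s h0; rw [hH]; positivity
  have hftc : ∀ a b : ℝ, (∫ u in a..b, d u) = H b - H a := fun a b =>
    intervalIntegral.integral_eq_sub_of_hasDerivAt (fun s _ => hderiv s)
      (hcont.intervalIntegrable a b)
  have key : ∀ a b : ℝ, 0 ≤ a → a ≤ b → b ≤ N → (∫ u in a..b, |d u|) = H b - H a := by
    intro a b h0 h1 h2
    rw [← hftc a b]
    apply intervalIntegral.integral_congr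
    intro s hs
    rw [Set.uIcc_of_le h1] at hs
    exact abs_of_nonneg (hdpos s (le_trans h0 hs.1) (le_trans hs.2 h2))
  have key2 : ∀ a b : ℝ, N ≤ a → a ≤ b → (∫ u in a..b, |d u|) = H a - H b := by
    intro a b h1 h2
    have : (∫ u in a..b, |d u|) = ∫ u in a..b, -d u := by
      apply intervalIntegral.integral_congr
      intro s hs
      rw [Set.uIcc_of_le h2] at hs
      exact abs_of_nonpos (hdneg s (le_trans h1 hs.1))
    rw [this, intervalIntegral.integral_neg, hftc]
    ring
  have hHN : H N = Real.exp (-((m:ℝ)+1)) * ((m:ℝ)+1) ^ (m+1) / (m+1).factorial := by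
    rw [hH, hN]
  rcases le_total x N with hxN | hNx
  · rw [key 0 x (le_refl 0) hx hxN, hH0, sub_zero]
    have : H x ≤ H N := by
      have := hftc x N
      have h2 : 0 ≤ ∫ u in x..N, d u := by
        apply intervalIntegral.integral_nonneg hxN
        intro s hs
        exact hdpos s (le_trans hx hs.1) hs.2
      linarith
    rw [hHN] at this
    nlinarith [hHnonneg N hN0.le, hHN]
  · rw [← intervalIntegral.integral_add_adjacent_intervals
      (a := (0:ℝ)) (b := N) (c := x)
      ((hcont.abs).intervalIntegrable 0 N) ((hcont.abs).intervalIntegrable N x)]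
    rw [key 0 N (le_refl 0) hN0.le (le_refl N), key2 N x (le_refl N) hNx, hH0, sub_zero]
    have h3 := hHnonneg x (le_trans hN0.le hNx)
    rw [← hHN]
    linarith

/-- Main pointwise bound for `x ≥ 0`. -/
lemma aux_main (f : ℝ → ℝ) (C : ℝ) (hf : Measurable f) (hbd : ∀ x, |f x| ≤ C)
    (n : ℕ) (hn : 1 ≤ n) (x : ℝ) (hx : 0 ≤ x) :
    |Sop^[n] f x - Sop^[n+1] f x| ≤ 2 * C * Real.exp (-(n:ℝ)) * (n:ℝ) ^ n / n.factorial := by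
  have hC : 0 ≤ C := le_trans (abs_nonneg _) (hbd 0)
  obtain ⟨m, rfl⟩ : ∃ m, n = m + 1 := ⟨n - 1, (Nat.succ_pred_eq_of_pos hn).symm⟩
  rw [aux_kernel f C hf hbd m x hx, aux_kernel f C hf hbd (m+1) x hx]
  set d : ℝ → ℝ := fun s => Real.exp (-s) * (s ^ m / m.factorial - s ^ (m+1) / (m+1).factorial)
    with hd
  -- integrands
  set g1 : ℝ → ℝ := fun t => (x - t) ^ m / m.factorial * (f t * Real.exp t) with hg1
  set g2 : ℝ → ℝ := fun t => (x - t) ^ (m+1) / (m+1).factorial * (f t * Real.exp t) with hg2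
  have hmg1 : Measurable g1 :=
    (((measurable_const.sub measurable_id).pow_const m).div_const _).mul
      (hf.mul Real.measurable_exp)
  have hmg2 : Measurable g2 :=
    (((measurable_const.sub measurable_id).pow_const (m+1)).div_const _).mul
      (hf.mul Real.measurable_exp)
  have hbnd : ∀ (k : ℕ), ∀ t ∈ Icc (0:ℝ) x,
      |(x - t) ^ k / k.factorial * (f t * Real.exp t)| ≤ x ^ k / k.factorial * (C * Real.exp x) := by
    intro k t ht
    rw [abs_mul, abs_mul, abs_div, abs_pow, Nat.abs_cast,
      abs_of_nonneg (Real.exp_pos t).le]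
    have h1 : |x - t| ≤ x := by rw [abs_of_nonneg (by linarith [ht.2])]; linarith [ht.1]
    have h4 : (0:ℝ) < k.factorial := Nat.cast_pos.mpr k.factorial_pos
    gcongr <;> first
      | exact h1
      | exact hbd t
      | exact Real.exp_le_exp.2 ht.2
      | exact ht.2
  have hI1 : IntervalIntegrable g1 volume 0 x := aux_II hmg1 hx (hbnd m)
  have hI2 : IntervalIntegrable g2 volume 0 x := aux_II hmg2 hx (hbnd (m+1))
  rw [← mul_sub, ← intervalIntegral.integral_sub hI1 hI2]
  rw [← intervalIntegral.integral_const_mul]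
  have habs := intervalIntegral.abs_integral_le_integral_abs
    (f := fun t => Real.exp (-x) * (g1 t - g2 t)) (a := 0) (b := x) (μ := volume) hx
  refine le_trans habs ?_
  have hptw : ∀ t ∈ Icc (0:ℝ) x, |Real.exp (-x) * (g1 t - g2 t)| ≤ C * |d (x - t)| := by
    intro t ht
    have hexp : Real.exp (-x) * Real.exp t = Real.exp (-(x - t)) := by
      rw [← Real.exp_add]; ring_nf
    have heq : Real.exp (-x) * (g1 t - g2 t) = d (x - t) * f t := by
      have h5 : Real.exp (-(x-t)) = Real.exp (-x) * Real.exp t := hexp.symm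
      simp only [hg1, hg2, hd]
      rw [h5]; ring
    rw [heq, abs_mul, mul_comm C _]
    exact mul_le_mul_of_nonneg_left (hbd t) (abs_nonneg _)
  have hIabs : IntervalIntegrable (fun t => |Real.exp (-x) * (g1 t - g2 t)|) volume 0 x := by
    apply IntervalIntegrable.abs
    exact (IntervalIntegrable.sub hI1 hI2).const_mul _
  have hIdabs : IntervalIntegrable (fun t => C * |d (x - t)|) volume 0 x := by
    apply Continuous.intervalIntegrable
    have hcd : Continuous d := by
      apply Continuous.mul
      · exact Real.continuous_exp.comp continuous_neg
      · exact ((continuous_pow m).div_const _).sub ((continuous_pow (m+1)).div_const _)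
    exact continuous_const.mul ((hcd.comp (continuous_const.sub continuous_id)).abs)
  have hmono := intervalIntegral.integral_mono_on hx hIabs hIdabs hptw
  refine le_trans hmono ?_
  rw [intervalIntegral.integral_const_mul]
  have hsub : (∫ t in (0:ℝ)..x, |d (x - t)|) = ∫ u in (0:ℝ)..x, |d u| := by
    have := intervalIntegral.integral_comp_sub_left (fun u => |d u|) x (a := 0) (b := x)
    rw [this, sub_self, sub_zero]
  rw [hsub]
  have hbound := aux_hint m x hx
  have hcast : ((m:ℝ) + 1) = ((m+1 : ℕ) : ℝ) := by push_cast; ring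
  calc C * ∫ u in (0:ℝ)..x, |d u|
      ≤ C * (2 * (Real.exp (-((m:ℝ)+1)) * ((m:ℝ)+1) ^ (m+1) / (m+1).factorial)) := by
        exact mul_le_mul_of_nonneg_left hbound hC
    _ = 2 * C * Real.exp (-((m+1:ℕ):ℝ)) * ((m+1:ℕ):ℝ) ^ (m+1) / (m+1).factorial := by
        rw [← hcast]; ring

/-- Stirling-type limit: `e^{-n} n^n / n! → 0`. -/
lemma aux_stirling :
    Tendsto (fun n : ℕ => Real.exp (-(n:ℝ)) * (n:ℝ) ^ n / n.factorial) atTop (nhds 0) := by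
  have hsqrt : Tendsto (fun n : ℕ => Real.sqrt (2 * n)) atTop atTop := by
    apply Filter.Tendsto.comp (g := Real.sqrt)
    · rw [Filter.tendsto_atTop_atTop]
      intro b
      refine ⟨b ^ 2, fun a ha => ?_⟩
      nlinarith [Real.sq_sqrt (le_trans (sq_nonneg b) ha), Real.sqrt_nonneg a,
        sq_nonneg (Real.sqrt a - b), sq_nonneg (Real.sqrt a + b)]
    · exact (tendsto_natCast_atTop_atTop (R := ℝ)).const_mul_atTop (by norm_num)
  have hs : Tendsto (fun n : ℕ => Real.sqrt (2 * n) * Stirling.stirlingSeq n) atTop atTop :=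
    Filter.Tendsto.atTop_mul_pos (Real.sqrt_pos.2 Real.pi_pos) hsqrt
      Stirling.tendsto_stirlingSeq_sqrt_pi
  have hinv : Tendsto (fun n : ℕ => (Real.sqrt (2 * n) * Stirling.stirlingSeq n)⁻¹) atTop
      (nhds 0) := hs.inv_tendsto_atTop
  apply hinv.congr'
  filter_upwards [eventually_ge_atTop 1] with n hn
  have hn0 : (0:ℝ) < n := by exact_mod_cast hn
  have hsq : (0:ℝ) < Real.sqrt (2 * n) := Real.sqrt_pos.2 (by positivity)
  have hfac : (0:ℝ) < n.factorial := Nat.cast_pos.mpr n.factorial_pos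
  have hexp : (0:ℝ) < Real.exp 1 := Real.exp_pos 1
  rw [Stirling.stirlingSeq]
  rw [Real.exp_neg]
  have hexpn : Real.exp (n:ℝ) = Real.exp 1 ^ n := (Real.exp_one_pow n).symm
  rw [hexpn]
  have hpow : (0:ℝ) < ((n:ℝ) / Real.exp 1) ^ n := by positivity
  field_simp
  rw [← mul_pow, div_mul_cancel₀ _ hexp.ne']

/- ### Main theorem -/

/-- `Ē_∞(f − Sf) = 0`: precisely, `|Ēₙ(f − Sf)| ≤ 2‖f‖_∞ e^{-n} nⁿ/n!` and
`Ēₙ(f − Sf) → 0` as `n → ∞`. -/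
theorem stmt17 (f : ℝ → ℝ) (C : ℝ) (hf : Measurable f) (hbd : ∀ x, |f x| ≤ C) :
    (∀ n : ℕ, 1 ≤ n →
      |En (fun x => f x - Sop f x) n|
        ≤ 2 * C * Real.exp (-(n:ℝ)) * (n:ℝ) ^ n / n.factorial) ∧
    Tendsto (fun n : ℕ => En (fun x => f x - Sop f x) n) atTop (nhds 0) := by
  have hC : 0 ≤ C := le_trans (abs_nonneg _) (hbd 0)
  have hmain : ∀ n : ℕ, 1 ≤ n →
      |En (fun x => f x - Sop f x) n|
        ≤ 2 * C * Real.exp (-(n:ℝ)) * (n:ℝ) ^ n / n.factorial := by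
    intro n hn
    unfold En
    rw [aux_sub f C hf hbd n]
    apply aux_abs_limsup
    filter_upwards [eventually_ge_atTop (0:ℝ)] with x hx
    exact aux_main f C hf hbd n hn x hx
  refine ⟨hmain, ?_⟩
  have hB : Tendsto (fun n : ℕ => 2 * C * Real.exp (-(n:ℝ)) * (n:ℝ) ^ n / n.factorial) atTop
      (nhds 0) := by
    have := aux_stirling.const_mul (2 * C)
    rw [mul_zero] at this
    apply this.congr
    intro n
    ring
  have hBneg : Tendsto (fun n : ℕ => -(2 * C * Real.exp (-(n:ℝ)) * (n:ℝ) ^ n / n.factorial)) atTop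
      (nhds 0) := by
    have := hB.neg
    rwa [neg_zero] at this
  apply tendsto_of_tendsto_of_tendsto_of_le_of_le' hBneg hB
  · filter_upwards [eventually_ge_atTop 1] with n hn
    exact neg_le_of_abs_le (hmain n hn)
  · filter_upwards [eventually_ge_atTop 1] with n hn
    exact le_of_abs_le (hmain n hn)
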